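/- Let S² be the unit sphere in ℝ³ with the quandle operation a ⋆ b = 2⟨a,b⟩b − a. Then for a, b ∈ S², the pair (a,b) satisfies the figure-eight equations b ⋆ ( a ⋆ (b ⋆ a) ) = a and ( a ⋆ (b ⋆ a) ) ⋆ b = b ⋆ a if and only if b = a, or ⟨a,b⟩ = cos(2π/5), or ⟨a,b⟩ = cos(4π/5). Hence the invariant space J_{S²} of the figure-eight knot is the disjoint union of the diagonal {(a,a)} and the two sets {(a,b) : ⟨a,b⟩ = cos(2π/5)} and {(a,b) : ⟨a,b⟩ = cos(4π/5)}. -/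
import Mathlib

open scoped InnerProductSpace

lemma cos25 : Real.cos (2 * Real.pi / 5) = (Real.sqrt 5 - 1) / 4 := by
  have h5 : Real.sqrt 5 ^ 2 = 5 := Real.sq_sqrt (by norm_num)
  rw [show 2 * Real.pi / 5 = 2 * (Real.pi / 5) by ring, Real.cos_two_mul,
    Real.cos_pi_div_five]
  linear_combination (1/8) * h5

lemma cos45 : Real.cos (4 * Real.pi / 5) = -((1 + Real.sqrt 5) / 4) := by
  rw [show 4 * Real.pi / 5 = Real.pi - Real.pi / 5 by ring, Real.cos_pi_sub,
    Real.cos_pi_div_five]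

lemma key (star : EuclideanSpace ℝ (Fin 3) → EuclideanSpace ℝ (Fin 3) →
      EuclideanSpace ℝ (Fin 3))
    (hstar : ∀ a b : EuclideanSpace ℝ (Fin 3),
      star a b = (2 * ⟪a, b⟫_ℝ) • b - a)
    (a b : EuclideanSpace ℝ (Fin 3)) (ha : ‖a‖ = 1) (hb : ‖b‖ = 1) :
    ((star b (star a (star b a)) = a ∧
          star (star a (star b a)) b = star b a) ↔
        (b = a ∨ ⟪a, b⟫_ℝ = Real.cos (2 * Real.pi / 5) ∨
          ⟪a, b⟫_ℝ = Real.cos (4 * Real.pi / 5))) := by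
  have h5 : Real.sqrt 5 ^ 2 = 5 := Real.sq_sqrt (by norm_num)
  set t := ⟪a, b⟫_ℝ with htdef
  have haa : ⟪a, a⟫_ℝ = 1 := by rw [real_inner_self_eq_norm_sq, ha]; norm_num
  have hbb : ⟪b, b⟫_ℝ = 1 := by rw [real_inner_self_eq_norm_sq, hb]; norm_num
  have hba : ⟪b, a⟫_ℝ = t := (real_inner_comm b a).symm
  have hmain : 4 * t ^ 2 + 2 * t - 1 = 0 →
      (star b (star a (star b a)) = a ∧
        star (star a (star b a)) b = star b a) := by
    intro hq
    constructor
    · simp only [hstar, inner_sub_right, inner_sub_left, real_inner_smul_left,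
        real_inner_smul_right, haa, hbb, hba]
      match_scalars <;> rw [← htdef]
      · linear_combination (8*t^3-4*t^2-4*t+1) * hq
      · linear_combination (-(4*t^2-2*t-1)) * hq
    · simp only [hstar, inner_sub_right, inner_sub_left, real_inner_smul_left,
        real_inner_smul_right, haa, hbb, hba]
      match_scalars <;> rw [← htdef]
      · linear_combination (2*t-1) * hq
      · linear_combination (-1 : ℝ) * hq
  constructor
  · rintro ⟨h1, h2⟩
    have e2 : ⟪star (star a (star b a)) b, b⟫_ℝ = ⟪star b a, b⟫_ℝ := by rw [h2]
    simp only [hstar, inner_sub_right, inner_sub_left, real_inner_smul_left,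
      real_inner_smul_right, haa, hbb, hba] at e2
    have hfac : (t - 1) * (4 * t ^ 2 + 2 * t - 1) = 0 := by linear_combination e2
    rcases mul_eq_zero.1 hfac with h | hq
    · left
      have : t = 1 := by linarith
      exact ((inner_eq_one_iff_of_norm_eq_one ha hb).1 this).symm
    · have hfac2 : (t - (Real.sqrt 5 - 1) / 4) * (t - (-((1 + Real.sqrt 5) / 4))) = 0 := by
        linear_combination (1/4) * hq - (1/16) * h5
      rcases mul_eq_zero.1 hfac2 with h | h
      · right; left; rw [cos25]; linarith [sub_eq_zero.1 h]
      · right; right; rw [cos45]; linarith [sub_eq_zero.1 h]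
  · rintro (rfl | hc | hc)
    · have hsa : star b b = b := by rw [hstar, hbb]; module
      simp [hsa]
    · apply hmain
      rw [cos25] at hc
      rw [hc]; linear_combination (1/4) * h5
    · apply hmain
      rw [cos45] at hc
      rw [hc]; linear_combination (1/4) * h5

lemma sqrt5_facts : (0:ℝ) ≤ Real.sqrt 5 ∧ Real.sqrt 5 ^ 2 = 5 :=
  ⟨Real.sqrt_nonneg 5, Real.sq_sqrt (by norm_num)⟩

lemma cos25_ne_one : Real.cos (2 * Real.pi / 5) ≠ 1 := by
  rw [cos25]; obtain ⟨h0, h5⟩ := sqrt5_facts; intro h; nlinarith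

lemma cos45_ne_one : Real.cos (4 * Real.pi / 5) ≠ 1 := by
  rw [cos45]; obtain ⟨h0, h5⟩ := sqrt5_facts; intro h; nlinarith

lemma cos25_ne_cos45 : Real.cos (2 * Real.pi / 5) ≠ Real.cos (4 * Real.pi / 5) := by
  rw [cos25, cos45]; obtain ⟨h0, h5⟩ := sqrt5_facts; intro h; nlinarith

/-- For the sphere quandle `S² ⊆ ℝ³` with `a ⋆ b = 2⟨a,b⟩b − a`, a pair
`(a,b) ∈ S² × S²` satisfies the figure-eight equations
`b ⋆ (a ⋆ (b ⋆ a)) = a` and `(a ⋆ (b ⋆ a)) ⋆ b = b ⋆ a` if and only if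
`b = a`, or `⟨a,b⟩ = cos(2π/5)`, or `⟨a,b⟩ = cos(4π/5)`. Hence the invariant
space of the figure-eight knot is the disjoint union of the diagonal and the
two sets `{(a,b) : ⟨a,b⟩ = cos(2π/5)}` and `{(a,b) : ⟨a,b⟩ = cos(4π/5)}`. -/
theorem figure_eight_sphere_invariant_space
    (star : EuclideanSpace ℝ (Fin 3) → EuclideanSpace ℝ (Fin 3) →
      EuclideanSpace ℝ (Fin 3))
    (hstar : ∀ a b : EuclideanSpace ℝ (Fin 3),
      star a b = (2 * ⟪a, b⟫_ℝ) • b - a) :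
    (∀ a b : EuclideanSpace ℝ (Fin 3), ‖a‖ = 1 → ‖b‖ = 1 →
      ((star b (star a (star b a)) = a ∧
          star (star a (star b a)) b = star b a) ↔
        (b = a ∨ ⟪a, b⟫_ℝ = Real.cos (2 * Real.pi / 5) ∨
          ⟪a, b⟫_ℝ = Real.cos (4 * Real.pi / 5)))) ∧
    {p : EuclideanSpace ℝ (Fin 3) × EuclideanSpace ℝ (Fin 3) |
        ‖p.1‖ = 1 ∧ ‖p.2‖ = 1 ∧
        star p.2 (star p.1 (star p.2 p.1)) = p.1 ∧
        star (star p.1 (star p.2 p.1)) p.2 = star p.2 p.1} =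
      {p | ‖p.1‖ = 1 ∧ p.2 = p.1} ∪
        {p | ‖p.1‖ = 1 ∧ ‖p.2‖ = 1 ∧ ⟪p.1, p.2⟫_ℝ = Real.cos (2 * Real.pi / 5)} ∪
        {p | ‖p.1‖ = 1 ∧ ‖p.2‖ = 1 ∧ ⟪p.1, p.2⟫_ℝ = Real.cos (4 * Real.pi / 5)} ∧
    Disjoint
      {p : EuclideanSpace ℝ (Fin 3) × EuclideanSpace ℝ (Fin 3) |
        ‖p.1‖ = 1 ∧ p.2 = p.1}
      {p : EuclideanSpace ℝ (Fin 3) × EuclideanSpace ℝ (Fin 3) |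
        ‖p.1‖ = 1 ∧ ‖p.2‖ = 1 ∧ ⟪p.1, p.2⟫_ℝ = Real.cos (2 * Real.pi / 5)} ∧
    Disjoint
      {p : EuclideanSpace ℝ (Fin 3) × EuclideanSpace ℝ (Fin 3) |
        ‖p.1‖ = 1 ∧ p.2 = p.1}
      {p : EuclideanSpace ℝ (Fin 3) × EuclideanSpace ℝ (Fin 3) |
        ‖p.1‖ = 1 ∧ ‖p.2‖ = 1 ∧ ⟪p.1, p.2⟫_ℝ = Real.cos (4 * Real.pi / 5)} ∧
    Disjoint
      {p : EuclideanSpace ℝ (Fin 3) × EuclideanSpace ℝ (Fin 3) |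
        ‖p.1‖ = 1 ∧ ‖p.2‖ = 1 ∧ ⟪p.1, p.2⟫_ℝ = Real.cos (2 * Real.pi / 5)}
      {p : EuclideanSpace ℝ (Fin 3) × EuclideanSpace ℝ (Fin 3) |
        ‖p.1‖ = 1 ∧ ‖p.2‖ = 1 ∧ ⟪p.1, p.2⟫_ℝ = Real.cos (4 * Real.pi / 5)} := by
  refine ⟨key star hstar, ?_, ?_, ?_, ?_⟩
  · ext ⟨a, b⟩
    simp only [Set.mem_setOf_eq, Set.mem_union]
    constructor
    · rintro ⟨ha, hb, h1, h2⟩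
      rcases (key star hstar a b ha hb).1 ⟨h1, h2⟩ with h | h | h
      · exact Or.inl (Or.inl ⟨ha, h⟩)
      · exact Or.inl (Or.inr ⟨ha, hb, h⟩)
      · exact Or.inr ⟨ha, hb, h⟩
    · rintro ((⟨ha, rfl⟩ | ⟨ha, hb, h⟩) | ⟨ha, hb, h⟩)
      · obtain ⟨h1, h2⟩ := (key star hstar b b ha ha).2 (Or.inl rfl)
        exact ⟨ha, ha, h1, h2⟩
      · obtain ⟨h1, h2⟩ := (key star hstar a b ha hb).2 (Or.inr (Or.inl h))
        exact ⟨ha, hb, h1, h2⟩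
      · obtain ⟨h1, h2⟩ := (key star hstar a b ha hb).2 (Or.inr (Or.inr h))
        exact ⟨ha, hb, h1, h2⟩
  · rw [Set.disjoint_left]
    rintro ⟨a, b⟩ ⟨ha, hd⟩ ⟨-, -, h⟩
    obtain rfl : b = a := hd
    rw [real_inner_self_eq_norm_sq] at h
    rw [show ‖(b, b).1‖ = 1 from ha] at h
    exact cos25_ne_one (by linarith [h.symm])
  · rw [Set.disjoint_left]
    rintro ⟨a, b⟩ ⟨ha, hd⟩ ⟨-, -, h⟩
    obtain rfl : b = a := hd
    rw [real_inner_self_eq_norm_sq] at h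
    rw [show ‖(b, b).1‖ = 1 from ha] at h
    exact cos45_ne_one (by linarith [h.symm])
  · rw [Set.disjoint_left]
    rintro ⟨a, b⟩ ⟨-, -, h⟩ ⟨-, -, h'⟩
    exact cos25_ne_cos45 (h ▸ h')
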